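/- If X, X_1, X_2, ... are i.i.d. with E[X^4] < ∞, mean μ, and X is not a.s. equal to μ, then for every 0 < α ≤ 2, almost surely ∑_{n=1}^∞ |S_n/n - μ|^α = ∞. -/

import Mathlib

open MeasureTheory ProbabilityTheory Filter

section aux

lemma summable_sq_of_eventually_le {f g : ℕ → ℝ} (hg : Summable g)
    (h : ∀ᶠ n in atTop, f n ≤ g n) (h0 : ∀ n, 0 ≤ f n) : Summable f := by
  obtain ⟨n₀, hn₀⟩ := eventually_atTop.1 h
  have : Summable fun n => g (n + n₀) := (summable_nat_add_iff n₀).2 hg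
  have hf : Summable fun n => f (n + n₀) :=
    this.of_nonneg_of_le (fun n => h0 _) (fun n => hn₀ _ (Nat.le_add_left _ _))
  exact (summable_nat_add_iff n₀).1 hf

lemma summable_inv_sq_shift (c : ℝ) : Summable (fun m : ℕ => (c / (m + 1)) ^ 2) := by
  have h1 : Summable (fun m : ℕ => c ^ 2 * (1 / ((m : ℝ) + 1) ^ 2)) := by
    apply Summable.mul_left
    have := (summable_nat_add_iff 1).2 (Real.summable_one_div_nat_pow.2 (by norm_num : 1 < 2))
    simpa [add_comm] using this
  refine h1.congr fun m => by field_simp [div_pow]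

lemma summable_sq_of_sub {u v : ℕ → ℝ} {c : ℝ}
    (huv : ∀ᶠ m in atTop, u m - v m = c / (m + 1))
    (hu : Summable (fun m => (u m) ^ 2)) : Summable (fun m => (v m) ^ 2) := by
  have : Summable (fun m => 2 * (u m) ^ 2 + 2 * (c / (m + 1)) ^ 2) :=
    ((hu.mul_left 2).add ((summable_inv_sq_shift c).mul_left 2))
  refine summable_sq_of_eventually_le this ?_ (fun n => sq_nonneg _)
  filter_upwards [huv] with m hm
  have : v m = u m - c / (m + 1) := by linarith
  rw [this]; nlinarith [sq_nonneg (u m + c / (m+1))]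

lemma summable_sq_congr {a b : ℕ → ℝ} {c : ℝ}
    (h : ∀ᶠ m in atTop, a m - b m = c / (m + 1)) :
    Summable (fun m => (a m) ^ 2) ↔ Summable (fun m => (b m) ^ 2) := by
  constructor
  · exact summable_sq_of_sub h
  · refine summable_sq_of_sub (c := -c) ?_
    filter_upwards [h] with m hm
    rw [neg_div]; linarith

/-- α-reduction: summability of |a|^α for 0<α≤2 implies summability of a². -/
lemma summable_sq_of_summable_rpow {a : ℕ → ℝ} {α : ℝ} (hα0 : 0 < α) (hα2 : α ≤ 2)
    (hS : Summable fun n => |a n| ^ α) : Summable fun n => (a n) ^ 2 := by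
  have h0 : Tendsto (fun n => |a n| ^ α) atTop (nhds 0) := hS.tendsto_atTop_zero
  have hev : ∀ᶠ n in atTop, (a n) ^ 2 ≤ |a n| ^ α := by
    filter_upwards [h0.eventually (gt_mem_nhds one_pos)] with n hn
    rcases eq_or_lt_of_le (abs_nonneg (a n)) with h | h
    · rw [← sq_abs, ← h, Real.zero_rpow hα0.ne']; norm_num
    · have hle1 : |a n| ≤ 1 := by
        by_contra hgt
        push_neg at hgt
        have : 1 < |a n| ^ α := by
          rw [Real.one_lt_rpow_iff_of_pos h]; exact Or.inl ⟨hgt, hα0⟩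
        linarith
      calc (a n) ^ 2 = |a n| ^ ((2:ℕ):ℝ) := by rw [Real.rpow_natCast, sq_abs]
        _ ≤ |a n| ^ α := by
            exact Real.rpow_le_rpow_of_exponent_ge h hle1 (by exact_mod_cast hα2)
  exact summable_sq_of_eventually_le hS hev (fun n => sq_nonneg _)

lemma pz_aux {Ω : Type*} [MeasurableSpace Ω] (P : Measure Ω) [IsProbabilityMeasure P]
    (V : Ω → ℝ) (hVm : Measurable V) (hV0 : ∀ ω, 0 ≤ V ω)
    (hVint : Integrable V P) (hV2int : Integrable (fun ω => V ω ^ 2) P)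
    {r : ℝ} (hr : 0 < r) (hEV : 2 * r ≤ ∫ ω, V ω ∂P) :
    r ^ 2 ≤ (∫ ω, V ω ^ 2 ∂P) * (P {ω | r ≤ V ω}).toReal := by
  set A := {ω | r ≤ V ω} with hA
  have hAm : MeasurableSet A := measurableSet_le measurable_const hVm
  set p := (P A).toReal with hp
  set I := ∫ ω, V ω ^ 2 ∂P with hI
  have hp0 : 0 ≤ p := ENNReal.toReal_nonneg
  have hcompl : ∫ ω in Aᶜ, V ω ∂P ≤ r := by
    have h1 : ∫ ω in Aᶜ, V ω ∂P ≤ ∫ _ω in Aᶜ, r ∂P := by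
      refine setIntegral_mono_on hVint.integrableOn
        integrableOn_const hAm.compl ?_
      intro x hx
      simp only [A, Set.mem_compl_iff, Set.mem_setOf_eq, not_le] at hx
      exact hx.le
    have h2 : ∫ _ω in Aᶜ, r ∂P = r * (P Aᶜ).toReal := by simp [mul_comm, Measure.real]
    have h3 : (P Aᶜ).toReal ≤ 1 := by
      simpa using ENNReal.toReal_mono ENNReal.one_ne_top prob_le_one
    calc ∫ ω in Aᶜ, V ω ∂P ≤ r * (P Aᶜ).toReal := h2 ▸ h1
      _ ≤ r * 1 := by nlinarith
      _ = r := mul_one r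
  have hsplit : ∫ ω in A, V ω ∂P + ∫ ω in Aᶜ, V ω ∂P = ∫ ω, V ω ∂P :=
    integral_add_compl hAm hVint
  have hAint : r ≤ ∫ ω in A, V ω ∂P := by linarith
  have hIA : r ^ 2 * p ≤ ∫ ω in A, V ω ^ 2 ∂P := by
    have h1 : ∫ _ω in A, r ^ 2 ∂P ≤ ∫ ω in A, V ω ^ 2 ∂P := by
      refine setIntegral_mono_on integrableOn_const
        hV2int.integrableOn hAm ?_
      intro x hx
      have hxr : r ≤ V x := hx
      nlinarith [hV0 x]
    calc r ^ 2 * p = ∫ _ω in A, r ^ 2 ∂P := by simp [mul_comm, Measure.real, hp]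
      _ ≤ _ := h1
  have hIA' : ∫ ω in A, V ω ^ 2 ∂P ≤ I := by
    rw [hI, ← integral_add_compl hAm hV2int]
    have h0 : 0 ≤ ∫ ω in Aᶜ, V ω ^ 2 ∂P :=
      setIntegral_nonneg hAm.compl (fun x _ => sq_nonneg _)
    linarith
  have hppos : 0 < p := by
    rcases hp0.lt_or_eq with h | h
    · exact h
    · exfalso
      have hPA : P A = 0 := by
        rcases (ENNReal.toReal_eq_zero_iff (P A)).1 h.symm with h' | h'
        · exact h'
        · exact absurd h' (measure_ne_top P A)
      have hz : ∫ ω in A, V ω ∂P = 0 := by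
        rw [Measure.restrict_eq_zero.2 hPA]; simp
      linarith
  have hIpos : 0 < I := by
    have h5 : 0 < r ^ 2 * p := by positivity
    linarith
  set ε := r / I with hε
  have hεpos : 0 < ε := div_pos hr hIpos
  have hamgm : 2 * ∫ ω in A, V ω ∂P ≤ ε * I + (1 / ε) * p := by
    have hpt : ∀ x ∈ A, 2 * V x ≤ ε * V x ^ 2 + 1 / ε := by
      intro x _
      have hs := sq_nonneg (ε * V x - 1)
      have h1 : ε * (2 * V x) ≤ ε * (ε * V x ^ 2 + 1 / ε) := by
        have : ε * (1 / ε) = 1 := by field_simp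
        nlinarith
      exact le_of_mul_le_mul_left (by linarith [h1]) hεpos
    have h2 : ∫ ω in A, 2 * V ω ∂P ≤ ∫ ω in A, (ε * V ω ^ 2 + 1 / ε) ∂P := by
      refine setIntegral_mono_on ((hVint.const_mul 2).integrableOn) ?_ hAm hpt
      exact ((hV2int.const_mul ε).add (integrable_const _)).integrableOn
    rw [integral_const_mul] at h2
    rw [integral_add ((hV2int.const_mul ε).integrableOn)
      ((integrable_const _).integrableOn)] at h2
    rw [integral_const_mul] at h2
    have h3 : ∫ _ω in A, (1:ℝ) / ε ∂P = (1 / ε) * p := by simp [mul_comm, Measure.real, hp]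
    rw [h3] at h2
    have h4 : ε * ∫ ω in A, V ω ^ 2 ∂P ≤ ε * I := by nlinarith
    linarith
  have hfin : 2 * r ≤ r + (I * p) / r := by
    have hεI : ε * I = r := by rw [hε]; exact div_mul_cancel₀ r hIpos.ne'
    have hpε : (1 / ε) * p = (I * p) / r := by
      rw [hε, one_div_div]; ring
    calc 2 * r ≤ 2 * ∫ ω in A, V ω ∂P := by linarith
      _ ≤ ε * I + (1 / ε) * p := hamgm
      _ = r + (I * p) / r := by rw [hεI, hpε]
  have : r ≤ (I * p) / r := by linarith
  calc r ^ 2 = r * r := sq r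
    _ ≤ ((I * p) / r) * r := by nlinarith
    _ = I * p := by field_simp

variable {Ω : Type*} [MeasurableSpace Ω] {P : Measure Ω} [IsProbabilityMeasure P]

lemma integrable_pow_of_le_four {f : Ω → ℝ} (hf : Measurable f)
    (h4 : Integrable (fun ω => f ω ^ 4) P) {k : ℕ} (hk : k ≤ 4) :
    Integrable (fun ω => f ω ^ k) P := by
  refine ((integrable_const (1:ℝ)).add h4).mono'
    ((hf.pow_const k).aestronglyMeasurable) (ae_of_all _ fun ω => ?_)
  simp only [Pi.add_apply, Real.norm_eq_abs, abs_pow]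
  rcases le_total (|f ω|) 1 with h | h
  · have h1 : |f ω| ^ k ≤ 1 := pow_le_one₀ (abs_nonneg _) h
    have h2 : (0:ℝ) ≤ f ω ^ 4 := by positivity
    linarith
  · have h1 : |f ω| ^ k ≤ |f ω| ^ 4 := pow_le_pow_right₀ h hk
    have h2 : |f ω| ^ 4 = f ω ^ 4 := by
      rw [← abs_pow, abs_of_nonneg (by positivity)]
    linarith

theorem moments_partial_sum
    (Y : ℕ → Ω → ℝ) (hm : ∀ i, Measurable (Y i))
    (hind : iIndepFun Y P)
    (s2 s4 : ℝ)
    (hint4 : ∀ i, Integrable (fun ω => (Y i ω) ^ 4) P)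
    (h1 : ∀ i, ∫ ω, Y i ω ∂P = 0)
    (h2 : ∀ i, ∫ ω, (Y i ω) ^ 2 ∂P = s2)
    (h4 : ∀ i, ∫ ω, (Y i ω) ^ 4 ∂P = s4) (m : ℕ) :
    Integrable (fun ω => (∑ i ∈ Finset.range m, Y i ω) ^ 4) P ∧
    (∫ ω, (∑ i ∈ Finset.range m, Y i ω) ∂P) = 0 ∧
    (∫ ω, (∑ i ∈ Finset.range m, Y i ω) ^ 2 ∂P) = m * s2 ∧
    (∫ ω, (∑ i ∈ Finset.range m, Y i ω) ^ 4 ∂P) ≤ m ^ 2 * (s4 + 3 * s2 ^ 2) := by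
  have hs2 : 0 ≤ s2 := by rw [← h2 0]; positivity
  have hs4 : 0 ≤ s4 := by rw [← h4 0]; positivity
  induction m with
  | zero => simp
  | succ m ih =>
    obtain ⟨iT4, hT1, hT2, hT4⟩ := ih
    set T : Ω → ℝ := fun ω => ∑ i ∈ Finset.range m, Y i ω with hTdef
    set W : Ω → ℝ := fun ω => Y m ω with hWdef
    have hTm : Measurable T := by
      apply Finset.measurable_sum
      intro i _; exact hm i
    have hWm : Measurable W := hm m
    have hTW : IndepFun T W P := by
      have h := hind.indepFun_finsetSum_of_notMem hm (Finset.notMem_range_self (n := m))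
      have he : (∑ j ∈ Finset.range m, Y j) = T := by
        funext ω; simp [hTdef, Finset.sum_apply]
      rwa [he] at h
    have hab : ∀ a b : ℕ, IndepFun (fun ω => T ω ^ a) (fun ω => W ω ^ b) P := fun a b =>
      hTW.comp (measurable_id.pow_const a) (measurable_id.pow_const b)
    have iW4 : Integrable (fun ω => W ω ^ 4) P := hint4 m
    have iTk : ∀ k, k ≤ 4 → Integrable (fun ω => T ω ^ k) P := fun k hk =>
      integrable_pow_of_le_four hTm iT4 hk
    have iWk : ∀ k, k ≤ 4 → Integrable (fun ω => W ω ^ k) P := fun k hk =>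
      integrable_pow_of_le_four hWm iW4 hk
    have iMul : ∀ a b : ℕ, a ≤ 4 → b ≤ 4 →
        Integrable (fun ω => T ω ^ a * W ω ^ b) P := by
      intro a b ha hb
      have := (hab a b).integrable_mul (iTk a ha) (iWk b hb)
      simpa [Pi.mul_def] using this
    have hIab : ∀ a b : ℕ, a ≤ 4 → b ≤ 4 →
        (∫ ω, T ω ^ a * W ω ^ b ∂P) = (∫ ω, T ω ^ a ∂P) * ∫ ω, W ω ^ b ∂P := by
      intro a b ha hb
      have := (hab a b).integral_mul_eq_mul_integral (iTk a ha).aestronglyMeasurable (iWk b hb).aestronglyMeasurable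
      simpa [Pi.mul_def] using this
    -- moments of W
    have hW1 : ∫ ω, W ω ∂P = 0 := h1 m
    have hW2 : ∫ ω, W ω ^ 2 ∂P = s2 := h2 m
    have hW4 : ∫ ω, W ω ^ 4 ∂P = s4 := h4 m
    -- sum splits
    have hsum : ∀ ω, ∑ i ∈ Finset.range (m + 1), Y i ω = T ω + W ω := by
      intro ω; rw [Finset.sum_range_succ]
    -- primed moment facts
    have iT1 : Integrable T P := by simpa using iTk 1 (by norm_num)
    have iW1 : Integrable W P := by simpa using iWk 1 (by norm_num)
    have hT1' : ∫ ω, T ω ∂P = 0 := hT1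
    have hT2' : ∫ ω, T ω ^ 2 ∂P = m * s2 := hT2
    have hT4' : ∫ ω, T ω ^ 4 ∂P ≤ (m:ℝ) ^ 2 * (s4 + 3 * s2 ^ 2) := hT4
    -- first moment
    have m1 : (∫ ω, (∑ i ∈ Finset.range (m+1), Y i ω) ∂P) = 0 := by
      simp only [hsum]
      rw [integral_add iT1 iW1, hT1', hW1, add_zero]
    -- second moment
    have e2 : (fun ω => (T ω + W ω) ^ 2)
        = fun ω => T ω ^ 2 + (2 * (T ω ^ 1 * W ω ^ 1) + W ω ^ 2) := by
      funext ω; ring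
    have i11 : Integrable (fun ω => T ω ^ 1 * W ω ^ 1) P := iMul 1 1 (by norm_num) (by norm_num)
    have m2 : (∫ ω, (∑ i ∈ Finset.range (m+1), Y i ω) ^ 2 ∂P) = (m + 1 : ℕ) * s2 := by
      simp only [hsum]
      have iA : Integrable (fun ω => 2 * (T ω ^ 1 * W ω ^ 1) + W ω ^ 2) P :=
        (i11.const_mul 2).add (iWk 2 (by norm_num))
      rw [e2, integral_add (iTk 2 (by norm_num)) iA,
        integral_add (i11.const_mul 2) (iWk 2 (by norm_num)), integral_const_mul,
        hIab 1 1 (by norm_num) (by norm_num)]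
      simp only [pow_one, hT1', hW1, hT2', hW2]
      push_cast; ring
    -- fourth moment
    have e4 : (fun ω => (T ω + W ω) ^ 4)
        = fun ω => T ω ^ 4 + (4 * (T ω ^ 3 * W ω ^ 1) +
            (6 * (T ω ^ 2 * W ω ^ 2) + (4 * (T ω ^ 1 * W ω ^ 3) + W ω ^ 4))) := by
      funext ω; ring
    have i31 : Integrable (fun ω => T ω ^ 3 * W ω ^ 1) P := iMul 3 1 (by norm_num) (by norm_num)
    have i22 : Integrable (fun ω => T ω ^ 2 * W ω ^ 2) P := iMul 2 2 (by norm_num) (by norm_num)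
    have i13 : Integrable (fun ω => T ω ^ 1 * W ω ^ 3) P := iMul 1 3 (by norm_num) (by norm_num)
    have iB3 : Integrable (fun ω => 4 * (T ω ^ 1 * W ω ^ 3) + W ω ^ 4) P :=
      (i13.const_mul 4).add iW4
    have iB2 : Integrable (fun ω => 6 * (T ω ^ 2 * W ω ^ 2) +
        (4 * (T ω ^ 1 * W ω ^ 3) + W ω ^ 4)) P := (i22.const_mul 6).add iB3
    have irest : Integrable (fun ω => 4 * (T ω ^ 3 * W ω ^ 1) +
        (6 * (T ω ^ 2 * W ω ^ 2) + (4 * (T ω ^ 1 * W ω ^ 3) + W ω ^ 4))) P :=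
      (i31.const_mul 4).add iB2
    have i4sum : Integrable (fun ω => (∑ i ∈ Finset.range (m+1), Y i ω) ^ 4) P := by
      simp only [hsum]
      rw [e4]
      exact iT4.add irest
    have m4 : (∫ ω, (∑ i ∈ Finset.range (m+1), Y i ω) ^ 4 ∂P)
        = (∫ ω, T ω ^ 4 ∂P) + (6 * ((m * s2) * s2) + s4) := by
      simp only [hsum]
      rw [e4, integral_add iT4 irest,
        integral_add (i31.const_mul 4) iB2,
        integral_add (i22.const_mul 6) iB3,
        integral_add (i13.const_mul 4) iW4,
        integral_const_mul, integral_const_mul, integral_const_mul,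
        hIab 3 1 (by norm_num) (by norm_num), hIab 2 2 (by norm_num) (by norm_num),
        hIab 1 3 (by norm_num) (by norm_num)]
      simp only [pow_one, hT1', hW1, hT2', hW2, hW4]
      ring
    refine ⟨i4sum, m1, m2, ?_⟩
    rw [m4]
    have hmn : (0:ℝ) ≤ (m:ℝ) := Nat.cast_nonneg m
    push_cast
    nlinarith [mul_nonneg hmn hs4, sq_nonneg s2, mul_nonneg hmn (sq_nonneg s2)]

theorem block_prob
    (Y : ℕ → Ω → ℝ) (hm : ∀ i, Measurable (Y i))
    (hind : iIndepFun Y P)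
    (s2 s4 : ℝ)
    (hint4 : ∀ i, Integrable (fun ω => (Y i ω) ^ 4) P)
    (h1 : ∀ i, ∫ ω, Y i ω ∂P = 0)
    (h2 : ∀ i, ∫ ω, (Y i ω) ^ 2 ∂P = s2)
    (h4 : ∀ i, ∫ ω, (Y i ω) ^ 4 ∂P = s4)
    (hs2pos : 0 < s2) (N : ℕ) (hN : 1 ≤ N) :
    ENNReal.ofReal (s2 ^ 2 / (16 * (s4 + 3 * s2 ^ 2))) ≤
      P {ω | (N:ℝ) ^ 2 * s2 / 2 ≤
        ∑ n ∈ Finset.Ico N (2 * N), (∑ i ∈ Finset.range (n + 1), Y i ω) ^ 2} := by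
  have hs4 : 0 ≤ s4 := by rw [← h4 0]; positivity
  set C := s4 + 3 * s2 ^ 2 with hC
  have hCpos : 0 < C := by positivity
  set Z : ℕ → Ω → ℝ := fun n ω => ∑ i ∈ Finset.range (n + 1), Y i ω with hZ
  have hZm : ∀ n, Measurable (Z n) := fun n =>
    Finset.measurable_sum _ (fun i _ => hm i)
  have hmom : ∀ n : ℕ, Integrable (fun ω => Z n ω ^ 4) P ∧
      (∫ ω, (Z n ω) ^ 2 ∂P) = (n + 1 : ℕ) * s2 ∧
      (∫ ω, (Z n ω) ^ 4 ∂P) ≤ ((n + 1 : ℕ):ℝ) ^ 2 * C := by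
    intro n
    obtain ⟨i4, _, m2, m4⟩ := moments_partial_sum Y hm hind s2 s4 hint4 h1 h2 h4 (n + 1)
    exact ⟨i4, m2, m4⟩
  set V : Ω → ℝ := fun ω => ∑ n ∈ Finset.Ico N (2 * N), Z n ω ^ 2 with hV
  have hVm : Measurable V := Finset.measurable_sum _ (fun n _ => (hZm n).pow_const 2)
  have hV0 : ∀ ω, 0 ≤ V ω := fun ω => Finset.sum_nonneg (fun n _ => sq_nonneg _)
  have iZ2 : ∀ n, Integrable (fun ω => Z n ω ^ 2) P := fun n =>
    integrable_pow_of_le_four (hZm n) (hmom n).1 (by norm_num)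
  have iV : Integrable V P := by
    apply integrable_finset_sum
    intro n _; exact iZ2 n
  have cardIco : (Finset.Ico N (2 * N)).card = N := by
    rw [Nat.card_Ico]; omega
  -- lower bound for E V
  have hEV : (N:ℝ) ^ 2 * s2 ≤ ∫ ω, V ω ∂P := by
    rw [hV, integral_finset_sum _ (fun n _ => iZ2 n)]
    have : ∀ n ∈ Finset.Ico N (2 * N), (N:ℝ) * s2 ≤ ∫ ω, Z n ω ^ 2 ∂P := by
      intro n hn
      rw [(hmom n).2.1]
      have hn' : N ≤ n := (Finset.mem_Ico.1 hn).1
      have : (N:ℝ) ≤ (n + 1 : ℕ) := by exact_mod_cast Nat.le_succ_of_le hn'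
      nlinarith
    calc (N:ℝ) ^ 2 * s2 = (Finset.Ico N (2 * N)).card * ((N:ℝ) * s2) := by
          rw [cardIco]; ring
      _ = ∑ _n ∈ Finset.Ico N (2 * N), (N:ℝ) * s2 := by rw [Finset.sum_const, nsmul_eq_mul]
      _ ≤ _ := Finset.sum_le_sum this
  -- dominating function for V^2
  set W4 : Ω → ℝ := fun ω => (N:ℝ) * ∑ n ∈ Finset.Ico N (2 * N), Z n ω ^ 4 with hW4
  have iW4 : Integrable W4 P :=
    (integrable_finset_sum _ (fun n _ => (hmom n).1)).const_mul _
  have hdom : ∀ ω, V ω ^ 2 ≤ W4 ω := by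
    intro ω
    have := sq_sum_le_card_mul_sum_sq (s := Finset.Ico N (2 * N)) (f := fun n => Z n ω ^ 2)
    simp only [cardIco] at this
    calc V ω ^ 2 ≤ (N:ℝ) * ∑ n ∈ Finset.Ico N (2 * N), (Z n ω ^ 2) ^ 2 := this
      _ = W4 ω := by rw [hW4]; norm_num [← pow_mul]
  have iV2 : Integrable (fun ω => V ω ^ 2) P := by
    refine iW4.mono' ((hVm.pow_const 2).aestronglyMeasurable) (ae_of_all _ fun ω => ?_)
    rw [Real.norm_eq_abs, abs_of_nonneg (sq_nonneg _)]
    exact hdom ω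
  -- upper bound for E V^2
  have hEV2 : (∫ ω, V ω ^ 2 ∂P) ≤ 4 * C * (N:ℝ) ^ 4 := by
    have step1 : (∫ ω, V ω ^ 2 ∂P) ≤ ∫ ω, W4 ω ∂P := integral_mono iV2 iW4 hdom
    have step2 : (∫ ω, W4 ω ∂P) = (N:ℝ) * ∑ n ∈ Finset.Ico N (2 * N), ∫ ω, Z n ω ^ 4 ∂P := by
      rw [hW4]
      rw [integral_const_mul, integral_finset_sum _ (fun n _ => (hmom n).1)]
    have step3 : ∑ n ∈ Finset.Ico N (2 * N), (∫ ω, Z n ω ^ 4 ∂P)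
        ≤ ∑ _n ∈ Finset.Ico N (2 * N), 4 * (N:ℝ) ^ 2 * C := by
      refine Finset.sum_le_sum fun n hn => ?_
      refine le_trans (hmom n).2.2 ?_
      have hn' : n + 1 ≤ 2 * N := (Finset.mem_Ico.1 hn).2
      have h1 : ((n + 1 : ℕ):ℝ) ≤ 2 * N := by exact_mod_cast hn'
      have h0 : (0:ℝ) ≤ ((n + 1 : ℕ):ℝ) := Nat.cast_nonneg _
      have hsq : ((n + 1 : ℕ):ℝ) ^ 2 ≤ 4 * (N:ℝ) ^ 2 := by nlinarith
      calc ((n + 1 : ℕ):ℝ) ^ 2 * C ≤ (4 * (N:ℝ) ^ 2) * C :=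
            mul_le_mul_of_nonneg_right hsq hCpos.le
        _ = 4 * (N:ℝ) ^ 2 * C := by ring
    have step4 : (N:ℝ) * ∑ _n ∈ Finset.Ico N (2 * N), 4 * (N:ℝ) ^ 2 * C = 4 * C * (N:ℝ) ^ 4 := by
      rw [Finset.sum_const, cardIco, nsmul_eq_mul]; ring
    have hNnn : (0:ℝ) ≤ N := Nat.cast_nonneg N
    calc (∫ ω, V ω ^ 2 ∂P) ≤ (N:ℝ) * ∑ n ∈ Finset.Ico N (2 * N), ∫ ω, Z n ω ^ 4 ∂P := by
          rw [← step2]; exact step1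
      _ ≤ (N:ℝ) * ∑ _n ∈ Finset.Ico N (2 * N), 4 * (N:ℝ) ^ 2 * C := by
          exact mul_le_mul_of_nonneg_left step3 hNnn
      _ = 4 * C * (N:ℝ) ^ 4 := step4
  -- apply pz
  have hNpos : (0:ℝ) < N := by exact_mod_cast hN
  have hr : (0:ℝ) < (N:ℝ) ^ 2 * s2 / 2 := by positivity
  have hpz := pz_aux P V hVm hV0 iV iV2 hr (by linarith)
  set p := (P {ω | (N:ℝ) ^ 2 * s2 / 2 ≤ V ω}).toReal with hp
  have hppos : ((N:ℝ) ^ 2 * s2 / 2) ^ 2 ≤ 4 * C * (N:ℝ) ^ 4 * p := by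
    have hpnn : 0 ≤ p := ENNReal.toReal_nonneg
    have hmul : (∫ ω, V ω ^ 2 ∂P) * p ≤ 4 * C * (N:ℝ) ^ 4 * p :=
      mul_le_mul_of_nonneg_right hEV2 hpnn
    exact le_trans hpz hmul
  have hfinal : s2 ^ 2 / (16 * C) ≤ p := by
    rw [div_le_iff₀ (by positivity)]
    have hN4 : (0:ℝ) < (N:ℝ) ^ 4 := by positivity
    have key : (N:ℝ) ^ 4 * (s2 ^ 2 / 4) ≤ (N:ℝ) ^ 4 * (4 * C * p) := by nlinarith [hppos]
    have key2 : s2 ^ 2 / 4 ≤ 4 * C * p := le_of_mul_le_mul_left key hN4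
    nlinarith [key2]
  refine le_trans (ENNReal.ofReal_le_ofReal hfinal) ?_
  rw [hp]
  exact ENNReal.ofReal_toReal_le

theorem zero_one_summable (X : ℕ → Ω → ℝ) (hmeas : ∀ i, Measurable (X i))
    (hindep : iIndepFun X P) (μ : ℝ) :
    P {ω | ¬ Summable fun n : ℕ =>
      ((∑ i ∈ Finset.range (n + 1), X i ω) / (n + 1) - μ) ^ 2} = 0 ∨
    P {ω | ¬ Summable fun n : ℕ =>
      ((∑ i ∈ Finset.range (n + 1), X i ω) / (n + 1) - μ) ^ 2} = 1 := by
  set s : ℕ → MeasurableSpace Ω := fun n => MeasurableSpace.comap (X n) inferInstance with hs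
  have h_le : ∀ n, s n ≤ ‹MeasurableSpace Ω› := fun n => (hmeas n).comap_le
  have h_indep : iIndep s P := hindep.iIndep
  refine measure_zero_or_one_of_measurableSet_limsup_atTop h_le h_indep ?_
  rw [limsup_eq_iInf_iSup_of_nat]
  rw [MeasurableSpace.measurableSet_iInf]
  intro K
  set M : MeasurableSpace Ω := ⨆ i, ⨆ (_ : i ≥ K), s i with hM
  have hXi : ∀ i, K ≤ i → Measurable[M] (X i) := by
    intro i hi
    rw [measurable_iff_comap_le]
    exact le_biSup s hi
  set b : ℕ → Ω → ℝ := fun m ω =>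
    ((∑ i ∈ Finset.Ico K (m + 1), X i ω) - ((m:ℝ) + 1 - K) * μ) / (m + 1) with hb
  have hbm : ∀ m, Measurable[M] (b m) := by
    intro m
    apply Measurable.div_const
    apply Measurable.sub_const
    apply Finset.measurable_sum
    intro i hi
    exact hXi i (Finset.mem_Ico.1 hi).1
  -- pointwise equivalence of summability
  have hpt : ∀ ω, (¬ Summable fun n : ℕ =>
      ((∑ i ∈ Finset.range (n + 1), X i ω) / (n + 1) - μ) ^ 2) ↔
      ¬ Summable fun m : ℕ => (b m ω) ^ 2 := by
    intro ω
    apply not_congr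
    refine summable_sq_congr (c := (∑ i ∈ Finset.range K, X i ω) - K * μ) ?_
    filter_upwards [eventually_ge_atTop K] with m hm
    have hsplit : ∑ i ∈ Finset.range K, X i ω + ∑ i ∈ Finset.Ico K (m + 1), X i ω
        = ∑ i ∈ Finset.range (m + 1), X i ω :=
      Finset.sum_range_add_sum_Ico _ (by omega)
    have hm1 : ((m:ℝ) + 1) ≠ 0 := by positivity
    rw [hb]
    field_simp
    rw [← hsplit]
    ring
  -- event as countable boolean combination
  have hset : {ω | ¬ Summable fun n : ℕ =>
      ((∑ i ∈ Finset.range (n + 1), X i ω) / (n + 1) - μ) ^ 2}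
      = (⋃ (C : ℕ), ⋂ (n : ℕ), {ω | ∑ m ∈ Finset.range n, (b m ω) ^ 2 ≤ C})ᶜ := by
    ext ω
    simp only [Set.mem_setOf_eq, Set.mem_compl_iff, Set.mem_iUnion, Set.mem_iInter,
      Set.mem_setOf_eq, not_exists]
    rw [hpt ω]
    constructor
    · intro hns C hall
      exact hns (summable_of_sum_range_le (fun m => sq_nonneg _) hall)
    · intro hC hsum
      have h0 : ∀ m, 0 ≤ (b m ω) ^ 2 := fun m => sq_nonneg _
      obtain ⟨n, hn⟩ := not_forall.1 (hC ⌈∑' m, (b m ω) ^ 2⌉₊)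
      push_neg at hn
      have : ∑ m ∈ Finset.range n, (b m ω) ^ 2 ≤ ∑' m, (b m ω) ^ 2 :=
        Summable.sum_le_tsum _ (fun m _ => h0 m) hsum
      have h2 : (∑' m, (b m ω) ^ 2) ≤ ⌈∑' m, (b m ω) ^ 2⌉₊ := Nat.le_ceil _
      linarith
  rw [hset]
  apply MeasurableSet.compl
  apply MeasurableSet.iUnion
  intro C
  apply MeasurableSet.iInter
  intro n
  have : Measurable[M] fun ω => ∑ m ∈ Finset.range n, (b m ω) ^ 2 :=
    Finset.measurable_sum _ (fun m _ => ((hbm m).pow_const 2))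
  exact this measurableSet_Iic

end aux

open MeasureTheory ProbabilityTheory

/-- measurability of the summability event -/
lemma measurableSet_summable_sq {Ω : Type*} {m : MeasurableSpace Ω}
    (u : ℕ → Ω → ℝ) (hu : ∀ n, Measurable[m] (u n)) :
    MeasurableSet[m] {ω | Summable fun n => (u n ω) ^ 2} := by
  have hset : {ω | Summable fun n => (u n ω) ^ 2}
      = ⋃ (C : ℕ), ⋂ (n : ℕ), {ω | ∑ k ∈ Finset.range n, (u k ω) ^ 2 ≤ C} := by
    ext ω
    simp only [Set.mem_setOf_eq, Set.mem_iUnion, Set.mem_iInter, Set.mem_setOf_eq]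
    constructor
    · intro hsum
      refine ⟨⌈∑' k, (u k ω) ^ 2⌉₊, fun n => ?_⟩
      have h1 : ∑ k ∈ Finset.range n, (u k ω) ^ 2 ≤ ∑' k, (u k ω) ^ 2 :=
        Summable.sum_le_tsum _ (fun k _ => sq_nonneg _) hsum
      have h2 : (∑' k, (u k ω) ^ 2) ≤ ⌈∑' k, (u k ω) ^ 2⌉₊ := Nat.le_ceil _
      linarith
    · rintro ⟨C, hC⟩
      exact summable_of_sum_range_le (fun k => sq_nonneg _) hC
  rw [hset]
  apply MeasurableSet.iUnion
  intro C
  apply MeasurableSet.iInter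
  intro n
  have : Measurable[m] fun ω => ∑ k ∈ Finset.range n, (u k ω) ^ 2 :=
    Finset.measurable_sum _ (fun k _ => ((hu k).pow_const 2))
  exact this measurableSet_Iic

/-- If `X, X₁, X₂, …` are i.i.d. with `E[X⁴] < ∞`, mean `μ`, and `X` not a.s. equal to `μ`,
then for every `0 < α ≤ 2`, almost surely `∑ₙ |Sₙ/n − μ|^α = ∞`. -/
theorem stmt4 {Ω : Type*} [MeasurableSpace Ω] (P : Measure Ω) [IsProbabilityMeasure P]
    (X : ℕ → Ω → ℝ) (X0 : Ω → ℝ) (μ : ℝ)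
    (hmeas : ∀ i, Measurable (X i)) (hmeas0 : Measurable X0)
    (hindep : iIndepFun X P)
    (hident : ∀ i, IdentDistrib (X i) X0 P P)
    (hL4 : Integrable (fun ω => (X0 ω) ^ 4) P)
    (hmean : ∫ ω, X0 ω ∂P = μ)
    (hnondeg : ¬ (∀ᵐ ω ∂P, X0 ω = μ))
    (α : ℝ) (hα0 : 0 < α) (hα2 : α ≤ 2) :
    ∀ᵐ ω ∂P, ¬ Summable (fun n : ℕ =>
      |(∑ i ∈ Finset.range (n + 1), X i ω) / (n + 1) - μ| ^ α) := by
  -- centered variables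
  set Y0 : Ω → ℝ := fun ω => X0 ω - μ with hY0
  set Y : ℕ → Ω → ℝ := fun i ω => X i ω - μ with hYdef
  have hY0m : Measurable Y0 := hmeas0.sub_const μ
  have hYm : ∀ i, Measurable (Y i) := fun i => (hmeas i).sub_const μ
  have hYind : iIndepFun Y P :=
    hindep.comp (fun _ => fun x => x - μ) (fun _ => measurable_id.sub_const μ)
  have hYid : ∀ i, IdentDistrib (Y i) Y0 P P := fun i =>
    (hident i).comp (measurable_id.sub_const μ)
  -- integrability of Y0^4
  have iY04 : Integrable (fun ω => Y0 ω ^ 4) P := by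
    refine ((hL4.const_mul 8).add (integrable_const (8 * μ ^ 4))).mono'
      ((hY0m.pow_const 4).aestronglyMeasurable) (ae_of_all _ fun ω => ?_)
    simp only [Pi.add_apply, Real.norm_eq_abs, hY0]
    rw [abs_of_nonneg (by positivity)]
    nlinarith [sq_nonneg (X0 ω + μ), sq_nonneg (X0 ω - μ), sq_nonneg (X0 ω ^ 2 - μ ^ 2),
      sq_nonneg ((X0 ω) * μ), sq_nonneg (X0 ω ^ 2 + μ ^ 2)]
  have hint4 : ∀ i, Integrable (fun ω => Y i ω ^ 4) P := fun i =>
    (((hYid i).comp (measurable_id.pow_const 4)).integrable_iff).2 iY04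
  -- X0 integrable
  have iX0 : Integrable X0 P := by
    refine ((integrable_const (1:ℝ)).add hL4).mono'
      hmeas0.aestronglyMeasurable (ae_of_all _ fun ω => ?_)
    simp only [Pi.add_apply, Real.norm_eq_abs]
    rcases le_total (|X0 ω|) 1 with h | h
    · have h4 : (0:ℝ) ≤ X0 ω ^ 4 := by positivity
      linarith
    · have h1 : |X0 ω| ≤ |X0 ω| ^ 4 := le_self_pow₀ h (by norm_num)
      have h2 : |X0 ω| ^ 4 = X0 ω ^ 4 := by
        rw [← abs_pow, abs_of_nonneg (by positivity)]
      linarith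
  -- moments
  set s2 : ℝ := ∫ ω, Y0 ω ^ 2 ∂P with hs2def
  set s4 : ℝ := ∫ ω, Y0 ω ^ 4 ∂P with hs4def
  have h1 : ∀ i, ∫ ω, Y i ω ∂P = 0 := by
    intro i
    rw [(hYid i).integral_eq]
    rw [hY0]
    rw [integral_sub iX0 (integrable_const μ)]
    simp [hmean]
  have h2 : ∀ i, ∫ ω, Y i ω ^ 2 ∂P = s2 := fun i =>
    ((hYid i).comp (measurable_id.pow_const 2)).integral_eq
  have h4 : ∀ i, ∫ ω, Y i ω ^ 4 ∂P = s4 := fun i =>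
    ((hYid i).comp (measurable_id.pow_const 4)).integral_eq
  have iY02 : Integrable (fun ω => Y0 ω ^ 2) P :=
    integrable_pow_of_le_four hY0m iY04 (by norm_num)
  have hs2pos : 0 < s2 := by
    rcases (integral_nonneg (f := fun ω => Y0 ω ^ 2) (fun ω => sq_nonneg (Y0 ω))).lt_or_eq with h | h
    · exact h
    · exfalso
      have := (integral_eq_zero_iff_of_nonneg (fun ω => sq_nonneg (Y0 ω)) iY02).1 h.symm
      apply hnondeg
      filter_upwards [this] with ω hω
      have : Y0 ω ^ 2 = 0 := hω
      have : Y0 ω = 0 := by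
        exact pow_eq_zero_iff (by norm_num) |>.1 this
      simpa [hY0, sub_eq_zero] using this
  -- the tail event
  set t : Set Ω := {ω | ¬ Summable fun n : ℕ =>
      ((∑ i ∈ Finset.range (n + 1), X i ω) / (n + 1) - μ) ^ 2} with ht
  have htm : MeasurableSet t := by
    have := measurableSet_summable_sq
      (fun n ω => (∑ i ∈ Finset.range (n + 1), X i ω) / (n + 1) - μ)
      (fun n => ((Finset.measurable_sum _ (fun i _ => hmeas i)).div_const _).sub_const μ)
    exact this.compl
  -- blocks
  set Z : ℕ → Ω → ℝ := fun n ω => ∑ i ∈ Finset.range (n + 1), Y i ω with hZ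
  set B : ℕ → Set Ω := fun k => {ω | ((2 ^ k : ℕ):ℝ) ^ 2 * s2 / 2 ≤
      ∑ n ∈ Finset.Ico (2 ^ k) (2 * 2 ^ k), Z n ω ^ 2} with hB
  have hBmeas : ∀ k, MeasurableSet (B k) := by
    intro k
    have : Measurable fun ω => ∑ n ∈ Finset.Ico (2 ^ k) (2 * 2 ^ k), Z n ω ^ 2 :=
      Finset.measurable_sum _ (fun n _ =>
        (Finset.measurable_sum _ (fun i _ => hYm i)).pow_const 2)
    exact measurableSet_le measurable_const this
  set δ : ℝ := s2 ^ 2 / (16 * (s4 + 3 * s2 ^ 2)) with hδ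
  have hs4nn : 0 ≤ s4 := by rw [hs4def]; positivity
  have hδpos : 0 < δ := by rw [hδ]; positivity
  have hPB : ∀ k, ENNReal.ofReal δ ≤ P (B k) := by
    intro k
    exact block_prob Y hYm hYind s2 s4 hint4 h1 h2 h4 hs2pos (2 ^ k) Nat.one_le_two_pow
  -- the limsup set
  set L : Set Ω := ⋂ K, ⋃ k, ⋃ (_ : K ≤ k), B k with hL
  have hLle : ENNReal.ofReal δ ≤ P L := by
    have hU : ∀ K : ℕ, MeasurableSet (⋃ k, ⋃ (_ : K ≤ k), B k) :=
      fun K => MeasurableSet.iUnion (fun k => MeasurableSet.iUnion (fun _ => hBmeas k))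
    have hdir : Directed (· ⊇ ·) (fun K : ℕ => ⋃ k, ⋃ (_ : K ≤ k), B k) := by
      intro K K'
      refine ⟨max K K', ?_, ?_⟩
      · intro ω hω
        simp only [Set.mem_iUnion] at hω ⊢
        obtain ⟨k, hk, hωk⟩ := hω
        exact ⟨k, le_trans (le_max_left _ _) hk, hωk⟩
      · intro ω hω
        simp only [Set.mem_iUnion] at hω ⊢
        obtain ⟨k, hk, hωk⟩ := hω
        exact ⟨k, le_trans (le_max_right _ _) hk, hωk⟩
    rw [hL, Directed.measure_iInter (fun K => (hU K).nullMeasurableSet) hdir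
      ⟨0, measure_ne_top _ _⟩]
    refine le_iInf fun K => ?_
    refine le_trans (hPB K) (measure_mono ?_)
    intro ω hω
    simp only [Set.mem_iUnion]
    exact ⟨K, le_refl K, hω⟩
  -- L ⊆ t
  have hLt : L ⊆ t := by
    intro ω hω
    simp only [hL, Set.mem_iInter, Set.mem_iUnion] at hω
    simp only [ht, Set.mem_setOf_eq]
    intro hsum
    -- vanishing
    have hnhds : Set.Ioo (-1 : ℝ) (s2 / 8) ∈ nhds (0:ℝ) :=
      Ioo_mem_nhds (by norm_num) (by positivity)
    obtain ⟨fs, hfs⟩ := hsum.vanishing hnhds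
    obtain ⟨k, hk, hωk⟩ := hω (fs.sup id + 1)
    set N : ℕ := 2 ^ k with hN
    have hdisj : Disjoint (Finset.Ico N (2 * N)) fs := by
      rw [Finset.disjoint_left]
      intro n hn hnfs
      have h1 : N ≤ n := (Finset.mem_Ico.1 hn).1
      have h2 : n ≤ fs.sup id := Finset.le_sup (f := id) hnfs
      have h3 : k < 2 ^ k := Nat.lt_two_pow_self
      omega
    have hin := hfs _ hdisj
    have hlower : s2 / 8 ≤ ∑ n ∈ Finset.Ico N (2 * N),
        ((∑ i ∈ Finset.range (n + 1), X i ω) / (n + 1) - μ) ^ 2 := by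
      have hterm : ∀ n ∈ Finset.Ico N (2 * N),
          Z n ω ^ 2 / ((2 * N : ℕ):ℝ) ^ 2 ≤
          ((∑ i ∈ Finset.range (n + 1), X i ω) / (n + 1) - μ) ^ 2 := by
        intro n hn
        have hn2 : n + 1 ≤ 2 * N := (Finset.mem_Ico.1 hn).2
        have hZa : (∑ i ∈ Finset.range (n + 1), X i ω) / (n + 1) - μ
            = Z n ω / (n + 1) := by
          rw [hZ]
          simp only [hYdef]
          rw [Finset.sum_sub_distrib, Finset.sum_const, Finset.card_range]
          have hne : ((n:ℝ) + 1) ≠ 0 := by positivity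
          field_simp
          simp [nsmul_eq_mul]
        rw [hZa, div_pow]
        apply div_le_div_of_nonneg_left (sq_nonneg _) (by positivity)
        have : ((n:ℝ) + 1) ≤ ((2 * N : ℕ):ℝ) := by exact_mod_cast hn2
        nlinarith [Nat.cast_nonneg (α := ℝ) n]
      have hsumterm : (∑ n ∈ Finset.Ico N (2 * N), Z n ω ^ 2) / ((2 * N : ℕ):ℝ) ^ 2
          ≤ ∑ n ∈ Finset.Ico N (2 * N),
            ((∑ i ∈ Finset.range (n + 1), X i ω) / (n + 1) - μ) ^ 2 := by
        rw [Finset.sum_div]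
        exact Finset.sum_le_sum hterm
      refine le_trans ?_ hsumterm
      have hNpos : (0:ℝ) < (N:ℝ) := by
        rw [hN]; positivity
      have hωk' : ((N:ℕ):ℝ) ^ 2 * s2 / 2 ≤ ∑ n ∈ Finset.Ico N (2 * N), Z n ω ^ 2 := hωk
      have hcast : ((2 * N : ℕ):ℝ) = 2 * (N:ℝ) := by push_cast; ring
      rw [hcast, div_le_div_iff₀ (by norm_num) (by positivity)]
      rw [div_le_iff₀ (by norm_num : (0:ℝ) < 2)] at hωk'
      nlinarith [hωk']
    rw [Set.mem_Ioo] at hin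
    linarith [hin.2]
  -- zero-one law
  have h01 := zero_one_summable X hmeas hindep μ
  have hPt : P t = 1 := by
    rcases h01 with h | h
    · exfalso
      have : ENNReal.ofReal δ ≤ P t := le_trans hLle (measure_mono hLt)
      rw [← ht] at h
      rw [h] at this
      exact absurd (le_antisymm this zero_le) (ENNReal.ofReal_pos.2 hδpos).ne'
    · exact h
  -- conclusion
  have hae : ∀ᵐ ω ∂P, ω ∈ t := by
    have hc : P tᶜ = 0 := by
      rw [measure_compl htm (measure_ne_top _ _), hPt]
      simp
    rw [ae_iff]
    convert hc using 2
    rfl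
  filter_upwards [hae] with ω hω
  intro hS
  exact hω (summable_sq_of_summable_rpow hα0 hα2 hS)
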